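/- arXiv:1710.00788 — 3 statements merged into one kernel-verified Lean document; each statement's English description precedes it below -/
import Mathlib

section
/- Let n, ℓ be natural numbers with ℓ ≤ n, let s, t be elements of a commutative ring, and fix an ℓ-element subset I of {1,…,n}. Then the sum over all ℓ-element subsets J of {1,…,n} of the permanent of the submatrix of sI_n + tJ_n with rows I and columns J equals Σ_i C(ℓ,i) · C(n-ℓ+i, i) · i! · s^{ℓ-i} t^{i}. -/
open Finset

/-- The permanent of the submatrix of `M` with rows indexed by `I` and columns indexed
by `J` (for `|I| = |J|`); expressed as a sum over bijections `I ≃ J`, which agrees with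
the permanent of the submatrix with rows and columns taken in increasing order. -/
def permOn {n : ℕ} {R : Type*} [CommSemiring R] (M : Matrix (Fin n) (Fin n) R)
    (I J : Finset (Fin n)) : R :=
  ∑ e : {i // i ∈ I} ≃ {j // j ∈ J}, ∏ i : {i // i ∈ I}, M i.1 (e i).1

section aux

variable {n : ℕ} {I : Finset (Fin n)}

/-- Embeddings fixing `S` pointwise are equivalent to embeddings of the complement of `S`
into the complement of (the image of) `S`. -/
def fixEquiv (S : Finset {i // i ∈ I}) :
    {f : {i // i ∈ I} ↪ Fin n // ∀ i ∈ S, (i : Fin n) = f i} ≃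
      ({i : {i // i ∈ I} // i ∉ S} ↪ {x : Fin n // x ∉ S.image Subtype.val}) where
  toFun := fun p =>
    ⟨fun i => ⟨p.1 i.1, by
        intro hmem
        obtain ⟨j, hjS, hj⟩ := Finset.mem_image.1 hmem
        have : j = i.1 := p.1.injective ((p.2 j hjS).symm.trans hj)
        exact i.2 (this ▸ hjS)⟩,
      fun a b h => Subtype.ext (p.1.injective (congrArg Subtype.val h))⟩
  invFun := fun g =>
    ⟨⟨fun i => if h : i ∈ S then (i : Fin n) else (g ⟨i, h⟩ : Fin n), by
        intro a b hab
        by_cases ha : a ∈ S <;> by_cases hb : b ∈ S <;>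
          simp only [ha, hb, dif_pos, dif_neg, not_false_iff] at hab
        · exact Subtype.ext hab
        · exact absurd (hab ▸ Finset.mem_image_of_mem Subtype.val ha) (g ⟨b, hb⟩).2
        · exact absurd (hab.symm ▸ Finset.mem_image_of_mem Subtype.val hb) (g ⟨a, ha⟩).2
        · exact congrArg Subtype.val (g.injective (Subtype.ext hab))⟩,
      fun i hi => by exact (dif_pos (t := fun _ => (i : Fin n)) (e := fun h => (g ⟨i, h⟩ : Fin n)) hi).symm⟩
  left_inv := fun p => Subtype.ext (DFunLike.ext _ _ fun i => by
    simp only [Function.Embedding.coeFn_mk]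
    split_ifs with h
    · exact p.2 i h
    · rfl)
  right_inv := fun g => DFunLike.ext _ _ fun i => by
    apply Subtype.ext
    simp only [Function.Embedding.coeFn_mk, dif_neg i.2]
    exact dif_neg i.2

lemma count_fix (S : Finset {i // i ∈ I}) :
    Fintype.card {f : {i // i ∈ I} ↪ Fin n // ∀ i ∈ S, (i : Fin n) = f i} =
      (n - S.card).descFactorial (I.card - S.card) := by
  rw [Fintype.card_congr (fixEquiv S), Fintype.card_embedding_eq]
  congr 1
  · have h1 : Fintype.card {x : Fin n // x ∈ S.image Subtype.val} =
        (S.image Subtype.val).card := Fintype.card_coe _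
    have h2 : (S.image Subtype.val).card = S.card :=
      Finset.card_image_of_injective _ Subtype.val_injective
    calc Fintype.card {x : Fin n // x ∉ S.image Subtype.val}
        = Fintype.card (Fin n) - Fintype.card {x : Fin n // x ∈ S.image Subtype.val} :=
          Fintype.card_subtype_compl _
      _ = n - S.card := by rw [h1, h2, Fintype.card_fin]
  · calc Fintype.card {i : {i // i ∈ I} // i ∉ S}
        = Fintype.card {i // i ∈ I} - Fintype.card {i : {i // i ∈ I} // i ∈ S} :=
          Fintype.card_subtype_compl _
      _ = I.card - S.card := by rw [Fintype.card_coe, Fintype.card_coe]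

lemma sum_permOn_eq_sum_emb {R : Type*} [CommRing R] (ℓ : ℕ) (hI : I.card = ℓ)
    (M : Matrix (Fin n) (Fin n) R) :
    ∑ J ∈ Finset.powersetCard ℓ (Finset.univ : Finset (Fin n)), permOn M I J =
      ∑ f : {i // i ∈ I} ↪ Fin n, ∏ i : {i // i ∈ I}, M i.1 (f i) := by
  classical
  have hmaps : ∀ f ∈ (Finset.univ : Finset ({i // i ∈ I} ↪ Fin n)),
      (I.attach.image fun i => f i) ∈ Finset.powersetCard ℓ (Finset.univ : Finset (Fin n)) := by
    intro f _
    rw [Finset.mem_powersetCard]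
    refine ⟨Finset.subset_univ _, ?_⟩
    rw [Finset.card_image_of_injective _ f.injective, Finset.card_attach, hI]
  rw [← Finset.sum_fiberwise_of_maps_to hmaps (fun f => ∏ i : {i // i ∈ I}, M i.1 (f i))]
  refine Finset.sum_congr rfl fun J hJ => ?_
  unfold permOn
  refine Finset.sum_bij' (i := fun (e : {i // i ∈ I} ≃ {j // j ∈ J}) _ =>
      (⟨fun i => (e i : Fin n), fun a b h => e.injective (Subtype.ext h)⟩ :
        {i // i ∈ I} ↪ Fin n))
    (j := fun f hf => Equiv.ofBijective (fun i => (⟨f i, by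
        have himg := (Finset.mem_filter.1 hf).2
        rw [← himg]
        exact Finset.mem_image_of_mem _ (Finset.mem_attach _ _)⟩ : {j // j ∈ J}))
      ⟨fun a b h => f.injective (congrArg Subtype.val h), fun j => by
        have himg := (Finset.mem_filter.1 hf).2
        have hj : (j : Fin n) ∈ I.attach.image fun i => f i := himg.symm ▸ j.2
        obtain ⟨i, _, hi⟩ := Finset.mem_image.1 hj
        exact ⟨i, Subtype.ext hi⟩⟩)
    ?_ ?_ ?_ ?_ ?_
  · intro e _
    rw [Finset.mem_filter]
    refine ⟨Finset.mem_univ _, ?_⟩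
    apply Finset.Subset.antisymm
    · intro x hx
      obtain ⟨i, _, hi⟩ := Finset.mem_image.1 hx
      exact hi ▸ (e i).2
    · intro x hx
      exact Finset.mem_image.2 ⟨e.symm ⟨x, hx⟩, Finset.mem_attach _ _, by exact congrArg Subtype.val (e.apply_symm_apply ⟨x, hx⟩)⟩
  · intro f hf
    exact Finset.mem_univ _
  · intro e he
    exact Equiv.ext fun i => Subtype.ext rfl
  · intro f hf
    exact DFunLike.ext _ _ fun i => rfl
  · intro e he
    rfl

end aux

/-- Row sums of the `ℓ`-th zeon power of `sI_n + tJ_n`: for a fixed `ℓ`-set `I`,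
`Σ_{|J|=ℓ} per((sI_n+tJ_n)_{IJ}) = Σ_i C(ℓ,i) C(n-ℓ+i,i) i! s^{ℓ-i} t^i`. -/
theorem stmt10 {R : Type*} [CommRing R] (n ℓ : ℕ) (hℓ : ℓ ≤ n) (s t : R)
    (I : Finset (Fin n)) (hI : I.card = ℓ) :
    ∑ J ∈ Finset.powersetCard ℓ (Finset.univ : Finset (Fin n)),
        permOn (s • (1 : Matrix (Fin n) (Fin n) R) +
          t • Matrix.of (fun _ _ => (1 : R))) I J =
      ∑ i ∈ Finset.range (ℓ + 1),
        (ℓ.choose i : R) * ((n - ℓ + i).choose i : R) * (i.factorial : R) *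
          s ^ (ℓ - i) * t ^ i := by
  classical
  set M : Matrix (Fin n) (Fin n) R :=
    s • (1 : Matrix (Fin n) (Fin n) R) + t • Matrix.of (fun _ _ => (1 : R)) with hMdef
  rw [sum_permOn_eq_sum_emb ℓ hI]
  have hM : ∀ (i : {i // i ∈ I}) (x : Fin n),
      M i.1 x = s * (if (i : Fin n) = x then 1 else 0) + t := by
    intro i x
    simp only [hMdef, Matrix.add_apply, Matrix.smul_apply, Matrix.one_apply, Matrix.of_apply,
      smul_eq_mul, mul_ite, mul_one, mul_zero]
  have hcard : (Finset.univ : Finset {i // i ∈ I}).card = ℓ := by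
    rw [Finset.card_univ, Fintype.card_coe, hI]
  calc
    ∑ f : {i // i ∈ I} ↪ Fin n, ∏ i : {i // i ∈ I}, M i.1 (f i)
      = ∑ f : {i // i ∈ I} ↪ Fin n, ∑ S ∈ (Finset.univ : Finset {i // i ∈ I}).powerset,
          s ^ S.card * t ^ (ℓ - S.card) * (if ∀ i ∈ S, (i : Fin n) = f i then 1 else 0) := by
        refine Finset.sum_congr rfl fun f _ => ?_
        simp_rw [hM]
        rw [Finset.prod_add]
        refine Finset.sum_congr rfl fun S _ => ?_
        have h1 : ∏ i ∈ S, (s * if (i : Fin n) = f i then 1 else 0) =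
            s ^ S.card * (if ∀ i ∈ S, (i : Fin n) = f i then 1 else 0) := by
          rw [Finset.prod_mul_distrib, Finset.prod_const, Finset.prod_boole]
          congr
        have h2 : ∏ _i ∈ Finset.univ \ S, t = t ^ (ℓ - S.card) := by
          rw [Finset.prod_const, Finset.card_sdiff_of_subset (Finset.subset_univ S), hcard]
        rw [h1, h2]; ring
    _ = ∑ S ∈ (Finset.univ : Finset {i // i ∈ I}).powerset,
          s ^ S.card * t ^ (ℓ - S.card) *
            ((n - S.card).descFactorial (ℓ - S.card) : R) := by
        rw [Finset.sum_comm]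
        refine Finset.sum_congr rfl fun S _ => ?_
        rw [← Finset.mul_sum, Finset.sum_boole]
        congr 2
        rw [← Fintype.card_subtype, count_fix, hI]
    _ = ∑ j ∈ Finset.range (ℓ + 1), (ℓ.choose j : R) *
          (s ^ j * t ^ (ℓ - j) * ((n - j).descFactorial (ℓ - j) : R)) := by
        rw [Finset.sum_powerset, hcard]
        refine Finset.sum_congr rfl fun j hj => ?_
        rw [Finset.sum_congr rfl (fun S hS => by
          rw [(Finset.mem_powersetCard.1 hS).2]),
          Finset.sum_const, Finset.card_powersetCard, hcard, nsmul_eq_mul]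
    _ = ∑ i ∈ Finset.range (ℓ + 1),
          (ℓ.choose i : R) * ((n - ℓ + i).choose i : R) * (i.factorial : R) *
            s ^ (ℓ - i) * t ^ i := by
        conv_rhs => rw [← Finset.sum_range_reflect]
        refine Finset.sum_congr rfl fun j hj => ?_
        rw [Finset.mem_range, Nat.lt_succ_iff] at hj
        have e0 : ℓ + 1 - 1 - j = ℓ - j := by omega
        have e1 : n - ℓ + (ℓ - j) = n - j := by omega
        have e2 : ℓ - (ℓ - j) = j := by omega
        rw [e0, e1, e2, Nat.choose_symm hj, Nat.descFactorial_eq_factorial_mul_choose]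
        push_cast
        ring
end

section
/- Let R be a commutative ring, s, t ∈ R, and let 0 ≤ ℓ ≤ n be natural numbers. Then P_{n,ℓ}(s,t) = Σ_{j=ℓ}^{n} C(n-ℓ, n-j) · j! · s^{n-j} t^{j}, where P_{n,ℓ}(s,t) is the permanent of the n×n matrix having n-ℓ diagonal entries equal to s+t and all other entries equal to t. -/
/-- The permanent of a square matrix: `per(M) = Σ_{σ} Π_i M_{i, σ(i)}`. -/
def permanent {α : Type*} [Fintype α] [DecidableEq α] {R : Type*} [CommSemiring R]
    (M : Matrix α α R) : R :=
  ∑ σ : Equiv.Perm α, ∏ i, M i (σ i)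

/-- The `n×n` matrix `M_{n,ℓ}(s,t)` whose first `n-ℓ` diagonal entries are `s+t`
and all of whose other entries are `t`: the `(i,j)`-entry is
`t + s·[i = j and i ≤ n-ℓ]` (`0`-indexed: `i < n-ℓ`). -/
def Mmat {R : Type*} [CommRing R] (n ℓ : ℕ) (s t : R) : Matrix (Fin n) (Fin n) R :=
  Matrix.of fun i j => t + if i = j ∧ (i : ℕ) < n - ℓ then s else 0

/-- `P_{n,ℓ}(s,t) = per(M_{n,ℓ}(s,t))`. -/
def P {R : Type*} [CommRing R] (n ℓ : ℕ) (s t : R) : R :=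
  permanent (Mmat n ℓ s t)


open Finset Equiv

lemma card_fixing {n : ℕ} (S : Finset (Fin n)) :
    (Finset.univ.filter (fun σ : Equiv.Perm (Fin n) => ∀ i ∈ S, σ i = i)).card
      = (n - S.card).factorial := by
  rw [← Fintype.card_subtype]
  have e1 : {σ : Equiv.Perm (Fin n) // ∀ i ∈ S, σ i = i} ≃
      {σ : Equiv.Perm (Fin n) // ∀ a, ¬ (a ∉ S) → σ a = a} :=
    Equiv.subtypeEquivRight (by simp)
  have e2 := (Equiv.Perm.subtypeEquivSubtypePerm (fun a : Fin n => a ∉ S)).symm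
  rw [Fintype.card_congr (e1.trans e2), Fintype.card_perm, Fintype.card_subtype]
  congr 1
  rw [Finset.filter_not, Finset.filter_mem_eq_inter, Finset.univ_inter,
    Finset.card_sdiff_of_subset (Finset.subset_univ S), Finset.card_univ, Fintype.card_fin]

lemma card_T {n m : ℕ} (hm : m ≤ n) :
    (Finset.univ.filter (fun i : Fin n => (i : ℕ) < m)).card = m := by
  have : Finset.univ.filter (fun i : Fin n => (i : ℕ) < m)
      = Finset.map (Fin.castLEEmb hm) Finset.univ := by
    ext i
    simp only [Finset.mem_filter, Finset.mem_univ, true_and, Finset.mem_map, Fin.castLEEmb,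
      Function.Embedding.coeFn_mk]
    constructor
    · intro hi; exact ⟨⟨i, hi⟩, by simp [Fin.ext_iff]⟩
    · rintro ⟨a, rfl⟩; exact a.2
  rw [this, Finset.card_map, Finset.card_univ, Fintype.card_fin]

theorem stmt13' {R : Type*} [CommRing R] (s t : R) (n ℓ : ℕ) (h : ℓ ≤ n) :
    (∑ σ : Equiv.Perm (Fin n), ∏ i, (t + if i = σ i ∧ (i : ℕ) < n - ℓ then s else 0)) =
      ∑ j ∈ Finset.Icc ℓ n,
        ((n - ℓ).choose (n - j) : R) * (j.factorial : R) * s ^ (n - j) * t ^ j := by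
  classical
  obtain ⟨m, hm⟩ : ∃ m, m = n - ℓ := ⟨_, rfl⟩
  rw [← hm]
  have hmn : m ≤ n := hm ▸ Nat.sub_le n ℓ
  set T : Finset (Fin n) := Finset.univ.filter (fun i : Fin n => (i : ℕ) < m) with hT
  have hTc : T.card = m := card_T hmn
  have prod_e : ∀ (σ : Equiv.Perm (Fin n)) (S : Finset (Fin n)),
      (∏ i ∈ S, (if i = σ i ∧ (i : ℕ) < m then s else 0))
        = if (∀ i ∈ S, (i : ℕ) < m) ∧ (∀ i ∈ S, σ i = i) then s ^ S.card else 0 := by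
    intro σ S
    split_ifs with hc
    · rw [Finset.prod_congr rfl (fun i hi => if_pos ⟨(hc.2 i hi).symm, hc.1 i hi⟩),
        Finset.prod_const]
    · push_neg at hc
      by_cases hA : ∀ i ∈ S, (i : ℕ) < m
      · obtain ⟨i, hi, hσi⟩ := hc hA
        exact Finset.prod_eq_zero hi (if_neg (fun hx => hσi hx.1.symm))
      · push_neg at hA
        obtain ⟨i, hi, him⟩ := hA
        exact Finset.prod_eq_zero hi (if_neg (fun hx => absurd hx.2 (not_lt.mpr him)))
  calc (∑ σ : Equiv.Perm (Fin n), ∏ i, (t + if i = σ i ∧ (i : ℕ) < m then s else 0))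
      = ∑ σ : Equiv.Perm (Fin n), ∑ S ∈ (Finset.univ : Finset (Fin n)).powerset,
          (∏ i ∈ S, (if i = σ i ∧ (i : ℕ) < m then s else 0)) * t ^ (n - S.card) := by
        refine Finset.sum_congr rfl fun σ _ => ?_
        rw [Finset.prod_congr rfl (fun i _ =>
          add_comm t (if i = σ i ∧ (i : ℕ) < m then s else 0)), Finset.prod_add]
        refine Finset.sum_congr rfl fun S hS => ?_
        rw [Finset.prod_const, Finset.card_sdiff_of_subset (Finset.subset_univ S),
          Finset.card_univ, Fintype.card_fin]
    _ = ∑ S ∈ (Finset.univ : Finset (Fin n)).powerset, ∑ σ : Equiv.Perm (Fin n),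
          (if (∀ i ∈ S, (i : ℕ) < m) ∧ (∀ i ∈ S, σ i = i)
            then s ^ S.card * t ^ (n - S.card) else 0) := by
        rw [Finset.sum_comm]
        refine Finset.sum_congr rfl fun S _ => Finset.sum_congr rfl fun σ _ => ?_
        rw [prod_e σ S, ite_mul, zero_mul]
    _ = ∑ S ∈ (Finset.univ : Finset (Fin n)).powerset,
          (if ∀ i ∈ S, (i : ℕ) < m
            then ((n - S.card).factorial : R) * (s ^ S.card * t ^ (n - S.card)) else 0) := by
        refine Finset.sum_congr rfl fun S _ => ?_
        by_cases hA : ∀ i ∈ S, (i : ℕ) < m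
        · rw [Finset.sum_congr rfl fun σ _ => if_congr (and_iff_right hA) rfl rfl,
            if_pos hA, ← Finset.sum_filter, Finset.sum_const, card_fixing, nsmul_eq_mul]
        · rw [if_neg hA]
          exact Finset.sum_eq_zero fun σ _ => if_neg (fun hc => hA hc.1)
    _ = ∑ S ∈ T.powerset, ((n - S.card).factorial : R) * (s ^ S.card * t ^ (n - S.card)) := by
        rw [← Finset.sum_filter]
        congr 1
        ext S
        simp only [Finset.mem_filter, Finset.mem_powerset, Finset.subset_univ, true_and, hT,
          Finset.subset_iff, Finset.mem_univ]
        tauto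
    _ = ∑ k ∈ Finset.range (m + 1),
          m.choose k • (((n - k).factorial : R) * (s ^ k * t ^ (n - k))) := by
        rw [Finset.sum_powerset_apply_card
          (fun k => ((n - k).factorial : R) * (s ^ k * t ^ (n - k))), hTc]
    _ = ∑ j ∈ Finset.Icc ℓ n,
          (m.choose (n - j) : R) * (j.factorial : R) * s ^ (n - j) * t ^ j := by
        refine Finset.sum_nbij' (fun k => n - k) (fun j => n - j) ?_ ?_ ?_ ?_ ?_
        · intro k hk
          rw [Finset.mem_range, Nat.lt_succ_iff] at hk
          simp only [Finset.mem_Icc]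
          omega
        · intro j hj
          rw [Finset.mem_Icc] at hj
          simp only [Finset.mem_range, Nat.lt_succ_iff]
          omega
        · intro k hk
          rw [Finset.mem_range, Nat.lt_succ_iff] at hk
          show n - (n - k) = k
          omega
        · intro j hj
          rw [Finset.mem_Icc] at hj
          show n - (n - j) = j
          omega
        · intro k hk
          rw [Finset.mem_range, Nat.lt_succ_iff] at hk
          have h1 : n - (n - k) = k := by omega
          show m.choose k • (((n - k).factorial : R) * (s ^ k * t ^ (n - k)))
            = (m.choose (n - (n - k)) : R) * ((n - k).factorial : R)
              * s ^ (n - (n - k)) * t ^ (n - k)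
          rw [h1, nsmul_eq_mul]
          ring

/-- `P_{n,ℓ}(s,t) = Σ_{j=ℓ}^{n} C(n-ℓ, n-j) · j! · s^{n-j} t^{j}`. -/
theorem stmt13 {R : Type*} [CommRing R] (s t : R) (n ℓ : ℕ) (h : ℓ ≤ n) :
    P n ℓ s t =
      ∑ j ∈ Finset.Icc ℓ n,
        ((n - ℓ).choose (n - j) : R) * (j.factorial : R) * s ^ (n - j) * t ^ j := by
  have key := stmt13' s t n ℓ h
  unfold P permanent Mmat
  simp only [Matrix.of_apply]
  exact key
end

section
/- Let R be a commutative ring, s, t, x ∈ R, and n a natural number. Then Σ_{ℓ=0}^{n} C(n,ℓ) · x^ℓ · P_{n,ℓ}(s,t) = P_{n,0}(s, t + xt), i.e., the associated polynomial Q_n(x) equals the permanent of the n×n matrix s·I_n + (t+xt)·J_n. -/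
open Finset Equiv Nat

lemma card_fix (n : ℕ) (S : Finset (Fin n)) :
    (Finset.univ.filter fun σ : Equiv.Perm (Fin n) => ∀ i ∈ S, σ i = i).card
      = (n - S.card)! := by
  rw [← Fintype.card_subtype]
  have e : {σ : Equiv.Perm (Fin n) // ∀ i ∈ S, σ i = i} ≃ Equiv.Perm {i : Fin n // ¬ i ∈ S} :=
    (Equiv.subtypeEquivRight (fun σ => by simp)).trans
      (Equiv.Perm.subtypeEquivSubtypePerm (fun i => ¬ i ∈ S)).symm
  rw [Fintype.card_congr e, Fintype.card_perm, Fintype.card_subtype_compl,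
    Fintype.card_coe, Fintype.card_fin]

lemma card_lt_filter (n m : ℕ) (h : m ≤ n) :
    (Finset.univ.filter fun i : Fin n => (i : ℕ) < m).card = m := by
  rw [← Fintype.card_subtype]
  rw [Fintype.card_congr
    (⟨fun i => ⟨i.1.1, i.2⟩, fun j => ⟨⟨j.1, lt_of_lt_of_le j.2 h⟩, j.2⟩,
      fun i => Subtype.ext (Fin.ext rfl), fun j => rfl⟩ :
        {i : Fin n // (i : ℕ) < m} ≃ Fin m), Fintype.card_fin]

lemma P_eq {R : Type*} [CommRing R] (n ℓ : ℕ) (s t : R) :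
    P n ℓ s t = ∑ k ∈ Finset.range (n - ℓ + 1),
      ((n - ℓ).choose k * (n - k)! : ℕ) * (s ^ k * t ^ (n - k)) := by
  set T : Finset (Fin n) := Finset.univ.filter fun i : Fin n => (i : ℕ) < n - ℓ with hT
  have hTcard : T.card = n - ℓ := card_lt_filter n (n - ℓ) (Nat.sub_le n ℓ)
  unfold P permanent Mmat
  simp only [Matrix.of_apply]
  have step1 : ∀ σ : Equiv.Perm (Fin n),
      (∏ i, (t + if i = σ i ∧ (i : ℕ) < n - ℓ then s else 0)) =
      ∑ S ∈ (Finset.univ : Finset (Fin n)).powerset,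
        (if ∀ i ∈ S, i = σ i ∧ (i : ℕ) < n - ℓ then s ^ S.card else 0) * t ^ (n - S.card) := by
    intro σ
    rw [Finset.prod_congr rfl (fun i _ => add_comm t _), Finset.prod_add]
    refine Finset.sum_congr rfl fun S hS => ?_
    rw [Finset.prod_ite_zero, Finset.prod_const, Finset.prod_const,
      Finset.card_sdiff_of_subset (Finset.subset_univ S), Finset.card_univ, Fintype.card_fin]
    convert rfl
  rw [Finset.sum_congr rfl fun σ _ => step1 σ, Finset.sum_comm]
  have step2 : ∀ S ∈ (Finset.univ : Finset (Fin n)).powerset,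
      (∑ σ : Equiv.Perm (Fin n),
        (if ∀ i ∈ S, i = σ i ∧ (i : ℕ) < n - ℓ then s ^ S.card else 0) * t ^ (n - S.card)) =
      if S ⊆ T then ((n - S.card)! : R) * (s ^ S.card * t ^ (n - S.card)) else 0 := by
    intro S _
    by_cases hS : S ⊆ T
    · have hiff : ∀ σ : Equiv.Perm (Fin n),
          (∀ i ∈ S, i = σ i ∧ (i : ℕ) < n - ℓ) ↔ (∀ i ∈ S, σ i = i) := by
        intro σ
        constructor
        · exact fun h i hi => (h i hi).1.symm
        · intro h i hi
          refine ⟨(h i hi).symm, ?_⟩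
          have := hS hi
          rw [hT, Finset.mem_filter] at this
          exact this.2
      simp_rw [hiff, if_pos hS]
      rw [← Finset.sum_mul, ← Finset.sum_filter, Finset.sum_const, card_fix,
        nsmul_eq_mul, mul_assoc]
    · rw [if_neg hS]
      apply Finset.sum_eq_zero
      intro σ _
      rw [if_neg, zero_mul]
      intro h
      exact hS fun i hi => by
        rw [hT, Finset.mem_filter]; exact ⟨Finset.mem_univ i, (h i hi).2⟩
  rw [Finset.sum_congr rfl step2, ← Finset.sum_filter]
  have hfil : (Finset.univ : Finset (Fin n)).powerset.filter (fun S => S ⊆ T) = T.powerset := by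
    ext S; simp
  rw [hfil, Finset.sum_powerset_apply_card
    (fun k => ((n - k)! : R) * (s ^ k * t ^ (n - k))) (x := T), hTcard]
  refine Finset.sum_congr rfl fun k _ => ?_
  rw [nsmul_eq_mul]
  push_cast
  ring

lemma chooseId (n ℓ k : ℕ) :
    n.choose ℓ * (n - ℓ).choose k = n.choose k * (n - k).choose ℓ := by
  by_cases h : ℓ + k ≤ n
  · have h1 := Nat.choose_mul (n := n) (k := ℓ + k) (s := ℓ) (Nat.le_add_right _ _)
    have h2 := Nat.choose_mul (n := n) (k := ℓ + k) (s := k) (Nat.le_add_left _ _)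
    have h3 : (ℓ + k).choose ℓ = (ℓ + k).choose k := by
      rw [← Nat.choose_symm (Nat.le_add_left k ℓ)]
      congr 1
      omega
    rw [show ℓ + k - ℓ = k by omega] at h1
    rw [show ℓ + k - k = ℓ by omega] at h2
    rw [← h1, ← h2, h3, Nat.mul_comm]
  · rcases le_or_gt ℓ n with hl | hl
    · rcases le_or_gt k n with hk | hk
      · rw [Nat.choose_eq_zero_of_lt (by omega : n - ℓ < k),
          Nat.choose_eq_zero_of_lt (by omega : n - k < ℓ), Nat.mul_zero, Nat.mul_zero]
      · rw [Nat.choose_eq_zero_of_lt hk, Nat.choose_eq_zero_of_lt (by omega : n - ℓ < k),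
          Nat.mul_zero, Nat.zero_mul]
    · rw [Nat.choose_eq_zero_of_lt hl, Nat.choose_eq_zero_of_lt (by omega : n - k < ℓ),
        Nat.zero_mul, Nat.mul_zero]


/-- The associated polynomial: `Q_n(x) = Σ_{ℓ=0}^{n} C(n,ℓ) x^ℓ P_{n,ℓ}(s,t)
= P_{n,0}(s, t + xt)`, the permanent of `s·I_n + (t+xt)·J_n`. -/
theorem stmt16 {R : Type*} [CommRing R] (s t x : R) (n : ℕ) :
    ∑ ℓ ∈ Finset.range (n + 1), (n.choose ℓ : R) * x ^ ℓ * P n ℓ s t =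
      P n 0 s (t + x * t) := by
  have hL : ∀ ℓ ∈ Finset.range (n + 1),
      (n.choose ℓ : R) * x ^ ℓ * P n ℓ s t =
      ∑ k ∈ Finset.range (n + 1),
        ((n.choose ℓ * ((n - ℓ).choose k * (n - k)!) : ℕ) : R)
          * (x ^ ℓ * (s ^ k * t ^ (n - k))) := by
    intro ℓ hℓ
    rw [P_eq, Finset.mul_sum,
      Finset.sum_subset (Finset.range_subset_range.2 (show n - ℓ + 1 ≤ n + 1 by omega))
        (fun k _ hk' => by
          rw [Nat.choose_eq_zero_of_lt
            (show n - ℓ < k by simp only [Finset.mem_range] at hk'; omega)]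
          push_cast; ring)]
    exact Finset.sum_congr rfl fun k _ => by push_cast; ring
  have hR : ∀ k ∈ Finset.range (n + 1),
      ((n.choose k * (n - k)! : ℕ) : R) * (s ^ k * (t + x * t) ^ (n - k)) =
      ∑ ℓ ∈ Finset.range (n + 1),
        ((n.choose k * ((n - k).choose ℓ * (n - k)!) : ℕ) : R)
          * (x ^ ℓ * (s ^ k * t ^ (n - k))) := by
    intro k hk
    have hb : (t + x * t) ^ (n - k) =
        ∑ ℓ ∈ Finset.range (n - k + 1), (((n - k).choose ℓ : ℕ) : R) * x ^ ℓ * t ^ (n - k) := by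
      rw [show t + x * t = (x + 1) * t by ring, mul_pow, add_pow, Finset.sum_mul]
      exact Finset.sum_congr rfl fun ℓ _ => by ring
    rw [hb, Finset.mul_sum, Finset.mul_sum,
      Finset.sum_subset (Finset.range_subset_range.2 (show n - k + 1 ≤ n + 1 by omega))
        (fun ℓ _ hl' => by
          rw [Nat.choose_eq_zero_of_lt
            (show n - k < ℓ by simp only [Finset.mem_range] at hl'; omega)]
          push_cast; ring)]
    exact Finset.sum_congr rfl fun ℓ _ => by push_cast; ring
  rw [Finset.sum_congr rfl hL, Finset.sum_comm, P_eq, Nat.sub_zero,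
    Finset.sum_congr rfl hR]
  refine Finset.sum_congr rfl fun k _ => Finset.sum_congr rfl fun ℓ _ => ?_
  congr 2
  rw [← Nat.mul_assoc, ← Nat.mul_assoc, chooseId]
end
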